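/- For all integers k ≥ 0, 0 ≤ i ≤ k, and every real x with 0 < |x| < 1/(2·cos(π/(k+2))), the generating function D_k(x;i) = Σ_{j≥0} D_k(i,j)·x^j satisfies the product formula D_k(x;i) = R_{k+1}(x²) · Π_{r=1}^{i} ( x · R_{k+1−r}(x²) ), where R_m(t) = U_{m-1}(1/(2√t)) / (√t · U_m(1/(2√t))). -/

import Mathlib

open Real Polynomial Polynomial.Chebyshev Finset

/-- Number of directed paths from `(0,0)` to `(j,i)` in the Bratteli diagram for `SU(2)_k`. -/
def bratteliD (k : ℕ) : ℕ → ℕ → ℕ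
  | i, 0 => if i = 0 then 1 else 0
  | i, j + 1 =>
      if i ≤ k then
        (if 1 ≤ i then bratteliD k (i - 1) j else 0) +
        (if i + 1 ≤ k then bratteliD k (i + 1) j else 0)
      else 0

/-- `R_m(t) = U_{m-1}(1/(2√t)) / (√t · U_m(1/(2√t)))`. -/
noncomputable def chebR (m : ℕ) (t : ℝ) : ℝ :=
  (Chebyshev.U ℝ ((m : ℤ) - 1)).eval (1 / (2 * Real.sqrt t)) /
    (Real.sqrt t * (Chebyshev.U ℝ (m : ℤ)).eval (1 / (2 * Real.sqrt t)))

lemma Upos_aux {y : ℝ} (hy : 1 ≤ y) : ∀ n : ℕ,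
    1 ≤ (U ℝ (n:ℤ)).eval y ∧ (U ℝ (n:ℤ)).eval y ≤ (U ℝ ((n:ℤ)+1)).eval y := by
  intro n
  induction n with
  | zero => simp [U_zero, U_one]; linarith
  | succ n ih =>
    obtain ⟨h1, h2⟩ := ih
    have hrec : (U ℝ ((n:ℤ)+1+1)).eval y = 2*y*(U ℝ ((n:ℤ)+1)).eval y - (U ℝ (n:ℤ)).eval y := by
      have h : (U ℝ ((n:ℤ)+2)) = 2 * X * U ℝ ((n:ℤ)+1) - U ℝ (n:ℤ) := U_add_two ℝ (n:ℤ)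
      rw [show ((n:ℤ)+1+1) = (n:ℤ)+2 by ring, h]
      simp [eval_mul, eval_sub]
    constructor
    · push_cast; linarith
    · push_cast; rw [hrec]; nlinarith

lemma Upos {m : ℕ} {y : ℝ} (hy : Real.cos (π/(m+1)) < y) : 0 < (U ℝ (m:ℤ)).eval y := by
  rcases le_or_gt 1 y with h1 | h1
  · linarith [(Upos_aux h1 m).1]
  · have hy1 : -1 ≤ y := le_of_lt (lt_of_le_of_lt (Real.neg_one_le_cos _) hy)
    set θ := Real.arccos y with hθ
    have hcos : Real.cos θ = y := Real.cos_arccos hy1 (le_of_lt h1)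
    have hθpos : 0 < θ := Real.arccos_pos.2 h1
    have hθpi : θ ≤ π := Real.arccos_le_pi y
    have hang : 0 ≤ π/(m+1) := by positivity
    have hangpi : π/(m+1) ≤ π := by
      apply div_le_self pi_nonneg; push_cast; linarith [Nat.cast_nonneg (α := ℝ) m]
    have hθlt : θ < π/(m+1) := by
      by_contra hcon
      push_neg at hcon
      have := Real.cos_le_cos_of_nonneg_of_le_pi hang hθpi hcon
      rw [hcos] at this; linarith
    have hs : 0 < Real.sin θ := Real.sin_pos_of_pos_of_lt_pi hθpos (lt_of_lt_of_le hθlt hangpi)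
    have hkey := U_real_cos θ (m:ℤ)
    rw [hcos] at hkey
    have hsin2 : 0 < Real.sin (((m:ℤ)+1) * θ) := by
      apply Real.sin_pos_of_pos_of_lt_pi
      · push_cast; positivity
      · push_cast
        have h2 : ((m:ℝ)+1) * θ < ((m:ℝ)+1) * (π/(m+1)) := by
          apply mul_lt_mul_of_pos_left hθlt; positivity
        rwa [mul_div_cancel₀] at h2
        positivity
    nlinarith [hkey]

lemma Srec (k : ℕ) (c : ℝ) (w : ℕ → ℝ) (hw0 : w 1 = 2*c*w 0)
    (hwrec : ∀ i, 1 ≤ i → w (i+1) + w (i-1) = 2*c*w i) (hwtop : w (k+1) = 0) (j : ℕ) :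
    ∑ i ∈ Finset.range (k+1), (bratteliD k i (j+1) : ℝ) * w i
      = 2*c * ∑ i ∈ Finset.range (k+1), (bratteliD k i j : ℝ) * w i := by
  have hsplit : ∀ i ∈ Finset.range (k+1), (bratteliD k i (j+1) : ℝ) * w i
      = (if 1 ≤ i then (bratteliD k (i-1) j : ℝ) else 0) * w i
        + (if i + 1 ≤ k then (bratteliD k (i+1) j : ℝ) else 0) * w i := by
    intro i hi
    rw [Finset.mem_range] at hi
    have : i ≤ k := by omega
    simp only [bratteliD, if_pos this]
    split_ifs <;> push_cast <;> ring
  rw [Finset.sum_congr rfl hsplit, Finset.sum_add_distrib]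
  have hT1 : ∑ i ∈ Finset.range (k+1), (if 1 ≤ i then (bratteliD k (i-1) j : ℝ) else 0) * w i
      = ∑ i ∈ Finset.range (k+1), (bratteliD k i j : ℝ) * w (i+1) := by
    rw [Finset.sum_range_succ' (fun i => (if 1 ≤ i then (bratteliD k (i-1) j : ℝ) else 0) * w i),
      Finset.sum_range_succ (fun i => (bratteliD k i j : ℝ) * w (i+1))]
    simp [hwtop]
  have hT2 : ∑ i ∈ Finset.range (k+1), (if i + 1 ≤ k then (bratteliD k (i+1) j : ℝ) else 0) * w i
      = ∑ i ∈ Finset.range (k+1), (if 1 ≤ i then (bratteliD k i j : ℝ) * w (i-1) else 0) := by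
    rw [Finset.sum_range_succ (fun i => (if i + 1 ≤ k then (bratteliD k (i+1) j : ℝ) else 0) * w i),
      Finset.sum_range_succ' (fun i => (if 1 ≤ i then (bratteliD k i j : ℝ) * w (i-1) else 0))]
    rw [if_neg (by omega), if_neg (by omega)]
    simp only [zero_mul, add_zero, Nat.add_sub_cancel]
    apply Finset.sum_congr rfl
    intro i hi
    rw [Finset.mem_range] at hi
    rw [if_pos (by omega), if_pos (by omega)]
  rw [hT1, hT2, ← Finset.sum_add_distrib, Finset.mul_sum]
  apply Finset.sum_congr rfl
  intro i _
  by_cases h1 : 1 ≤ i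
  · rw [if_pos h1]
    have := hwrec i h1
    nlinarith [this]
  · have : i = 0 := by omega
    subst this
    simp [hw0]; ring

set_option maxHeartbeats 2000000 in
theorem bratteliD_generating_function_product (k i : ℕ) (hik : i ≤ k) (x : ℝ)
    (hx0 : 0 < |x|) (hx1 : |x| < 1 / (2 * Real.cos (π / (k + 2)))) :
    Summable (fun j : ℕ => |(bratteliD k i j : ℝ) * x ^ j|) ∧
    (∑' j : ℕ, (bratteliD k i j : ℝ) * x ^ j) =
      chebR (k + 1) (x ^ 2) * ∏ r ∈ Finset.Icc 1 i, (x * chebR (k + 1 - r) (x ^ 2)) := by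
  set c := Real.cos (π / ((k:ℝ) + 2)) with hcdef
  -- positivity of c
  have hc : 0 < c := by
    by_contra hcon
    push_neg at hcon
    have h2 : 1 / (2*c) ≤ 0 := one_div_nonpos.mpr (by linarith)
    linarith [hx1, hx0]
  have hk1 : 1 ≤ k := by
    by_contra hcon
    have hk0 : k = 0 := by omega
    subst hk0
    norm_num at hcdef
    linarith
  have hxq : 2 * c * |x| < 1 := by
    have h2c : 0 < 2*c := by linarith
    have := (lt_div_iff₀ h2c).mp hx1
    nlinarith
  -- the eigenvector weights
  set θ₀ := π / ((k:ℝ) + 2) with hθ₀def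
  have hθpos : 0 < θ₀ := by
    apply div_pos pi_pos; positivity
  have hθtop : ((k:ℝ) + 2) * θ₀ = π := by
    rw [hθ₀def, mul_div_cancel₀]; positivity
  set w : ℕ → ℝ := fun i => Real.sin (((i:ℝ)+1) * θ₀) with hwdef
  have hwpos : ∀ i : ℕ, i ≤ k → 0 < w i := by
    intro i hi
    apply Real.sin_pos_of_pos_of_lt_pi
    · positivity
    · rw [← hθtop]
      apply mul_lt_mul_of_pos_right _ hθpos
      have : (i:ℝ) ≤ (k:ℝ) := by exact_mod_cast hi
      linarith
  have hwtop : w (k+1) = 0 := by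
    rw [hwdef]
    simp only [Nat.cast_add, Nat.cast_one]
    rw [show ((k:ℝ)+1+1) * θ₀ = ((k:ℝ)+2) * θ₀ by ring, hθtop, Real.sin_pi]
  have hw0 : w 1 = 2*c*w 0 := by
    rw [hwdef]
    simp only [Nat.cast_one, Nat.cast_zero]
    rw [show ((1:ℝ)+1) * θ₀ = 2*θ₀ by ring, Real.sin_two_mul,
      show ((0:ℝ)+1) * θ₀ = θ₀ by ring]
    rw [hcdef, hθ₀def]
    ring
  have hwrec : ∀ i, 1 ≤ i → w (i+1) + w (i-1) = 2*c*w i := by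
    intro i h1
    obtain ⟨i', rfl⟩ : ∃ i', i = i'+1 := ⟨i-1, by omega⟩
    rw [hwdef]
    simp only [Nat.cast_add, Nat.cast_one, Nat.add_sub_cancel]
    rw [show ((i':ℝ)+1+1+1) * θ₀ = ((i':ℝ)+1+1)*θ₀ + θ₀ by ring,
      show ((i':ℝ)+1) * θ₀ = ((i':ℝ)+1+1)*θ₀ - θ₀ by ring,
      Real.sin_add, Real.sin_sub, hcdef, hθ₀def]
    ring
  -- the exponential bound
  have hS : ∀ j : ℕ, ∑ i ∈ Finset.range (k+1), (bratteliD k i j : ℝ) * w i = (2*c)^j * w 0 := by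
    intro j
    induction j with
    | zero =>
      rw [Finset.sum_eq_single 0]
      · simp [bratteliD]
      · intro b _ hb; simp [bratteliD, hb]
      · intro h; exact absurd (Finset.mem_range.2 (by omega)) h
    | succ j ih =>
      rw [Srec k c w hw0 hwrec hwtop j, ih]; ring
  have hDle : ∀ i, i ≤ k → ∀ j, (bratteliD k i j : ℝ) ≤ (2*c)^j * w 0 / w i := by
    intro i hi j
    rw [le_div_iff₀ (hwpos i hi), ← hS j]
    apply Finset.single_le_sum (f := fun i' => (bratteliD k i' j : ℝ) * w i')
    · intro i' hi'
      rw [Finset.mem_range] at hi'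
      exact mul_nonneg (Nat.cast_nonneg _) (le_of_lt (hwpos i' (by omega)))
    · exact Finset.mem_range.2 (by omega)
  have hsum_abs : ∀ i, i ≤ k → Summable (fun j : ℕ => |(bratteliD k i j : ℝ) * x ^ j|) := by
    intro i hi
    refine Summable.of_nonneg_of_le (f := fun j => (w 0 / w i) * (2*c* |x|)^j)
      (fun j => abs_nonneg _) (fun j => ?_) ?_
    · rw [abs_mul, abs_pow, Nat.abs_cast]
      calc (bratteliD k i j : ℝ) * |x|^j
          ≤ ((2*c)^j * w 0 / w i) * |x|^j :=
            mul_le_mul_of_nonneg_right (hDle i hi j) (pow_nonneg (abs_nonneg x) j)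
        _ = (w 0 / w i) * (2*c* |x|)^j := by
            rw [mul_pow]; ring
    · exact Summable.mul_left _
        (summable_geometric_of_lt_one (mul_nonneg (by linarith) (abs_nonneg x)) hxq)
  have hFs : ∀ i, i ≤ k → Summable (fun j : ℕ => (bratteliD k i j : ℝ) * x ^ j) :=
    fun i hi => (hsum_abs i hi).of_abs
  set F : ℕ → ℝ := fun i => ∑' j : ℕ, (bratteliD k i j : ℝ) * x ^ j with hFdef
  -- the recurrence for F
  have hFrec : ∀ i, i ≤ k → F i = (if i = 0 then (1:ℝ) else 0)
      + x * ((if 1 ≤ i then F (i-1) else 0) + (if i+1 ≤ k then F (i+1) else 0)) := by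
    intro i hi
    rw [hFdef]
    simp only
    rw [Summable.tsum_eq_zero_add (hFs i hi)]
    by_cases h1 : 1 ≤ i <;> by_cases h2 : i+1 ≤ k
    · have hD : ∀ j : ℕ, (bratteliD k i (j+1) : ℝ) * x^(j+1)
          = x*((bratteliD k (i-1) j:ℝ)*x^j) + x*((bratteliD k (i+1) j:ℝ)*x^j) := by
        intro j
        simp only [bratteliD, if_pos hi, if_pos h1, if_pos h2]
        push_cast; ring
      rw [tsum_congr hD,
        Summable.tsum_add ((hFs (i-1) (by omega)).mul_left x) ((hFs (i+1) h2).mul_left x),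
        tsum_mul_left, tsum_mul_left, if_neg (by omega), if_pos h1, if_pos h2]
      simp [bratteliD, show ¬ i = 0 by omega]
      ring
    · have hD : ∀ j : ℕ, (bratteliD k i (j+1) : ℝ) * x^(j+1)
          = x*((bratteliD k (i-1) j:ℝ)*x^j) := by
        intro j
        simp only [bratteliD, if_pos hi, if_pos h1, if_neg h2]
        push_cast; ring
      rw [tsum_congr hD, tsum_mul_left, if_neg (by omega), if_pos h1, if_neg h2]
      simp [bratteliD, show ¬ i = 0 by omega]
    · have hi0 : i = 0 := by omega
      subst hi0
      have hD : ∀ j : ℕ, (bratteliD k 0 (j+1) : ℝ) * x^(j+1)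
          = x*((bratteliD k 1 j:ℝ)*x^j) := by
        intro j
        simp only [bratteliD, if_pos hi, if_neg h1, if_pos h2]
        push_cast; ring
      rw [tsum_congr hD, tsum_mul_left, if_pos rfl, if_neg h1, if_pos h2]
      simp [bratteliD]
    · omega
  -- Chebyshev setup
  have hsq : Real.sqrt (x^2) = |x| := Real.sqrt_sq_eq_abs x
  set y : ℝ := 1 / (2 * |x|) with hydef
  have hypos : 0 < y := by positivity
  have hyc : c < y := by
    rw [hydef, lt_div_iff₀ (by positivity)]
    nlinarith
  set Uev : ℤ → ℝ := fun n => (U ℝ n).eval y with hUdef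
  have hUpos : ∀ m : ℕ, m ≤ k+1 → 0 < Uev (m:ℤ) := by
    intro m hm
    apply Upos
    have hle : Real.cos (π/((m:ℝ)+1)) ≤ c := by
      rw [hcdef]
      apply Real.cos_le_cos_of_nonneg_of_le_pi
      · positivity
      · apply div_le_self pi_nonneg; push_cast; linarith [Nat.cast_nonneg (α := ℝ) m]
      · apply div_le_div_of_nonneg_left pi_nonneg (by positivity)
        push_cast
        have : (m:ℝ) ≤ (k:ℝ)+1 := by exact_mod_cast hm
        linarith
    linarith
  have hR : ∀ m : ℕ, chebR m (x^2) = Uev ((m:ℤ)-1) / (|x| * Uev (m:ℤ)) := by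
    intro m
    rw [chebR, hsq, hUdef, hydef]
  have hR' : ∀ m : ℕ, chebR (m+1) (x^2) = Uev (m:ℤ) / (|x| * Uev ((m:ℤ)+1)) := by
    intro m
    rw [hR (m+1), show (((m+1:ℕ)):ℤ) = (m:ℤ)+1 by push_cast; ring,
      show ((m:ℤ)+1)-1 = (m:ℤ) by ring]
  have h2y : 2*y* |x| = 1 := by
    rw [hydef]; field_simp
  have hUstep : ∀ m : ℕ, |x| * Uev ((m:ℤ)+1) = Uev (m:ℤ) - |x| * Uev ((m:ℤ)-1) := by
    intro m
    have h := U_add_one ℝ (m:ℤ)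
    have he : Uev ((m:ℤ)+1) = 2*y*Uev (m:ℤ) - Uev ((m:ℤ)-1) := by
      rw [hUdef]; simp only; rw [h]; simp [eval_mul, eval_sub]
    rw [he]
    linear_combination Uev ((m:ℤ)) * h2y
  have hxx : x^2 = |x|^2 := (sq_abs x).symm
  -- algebraic steps
  have halg : ∀ m : ℕ, m ≤ k → ∀ a b : ℝ, a = x*b + x^2 * chebR m (x^2) * a →
      a = x * chebR (m+1) (x^2) * b := by
    intro m hm a b h
    rw [hR m] at h
    rw [hR' m]
    set A := Uev ((m:ℤ)-1) with hA
    set B := Uev (m:ℤ) with hB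
    set C := Uev ((m:ℤ)+1) with hC
    have hBpos : 0 < B := hUpos m (by omega)
    have hCpos : 0 < C := by
      have h5 := hUpos (m+1) (by omega)
      rwa [show (((m+1:ℕ)):ℤ) = (m:ℤ)+1 by push_cast; ring] at h5
    have hkey : |x| * C = B - |x| * A := hUstep m
    have hxne : |x| ≠ 0 := ne_of_gt hx0
    have hBne : B ≠ 0 := ne_of_gt hBpos
    have hCne : C ≠ 0 := ne_of_gt hCpos
    have h1 : a * (|x| *B) = x*b*(|x| *B) + x^2*A*a := by
      conv_lhs => rw [h]
      field_simp
      try ring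
    have h2 : a * B = x*b*B + |x| *A*a :=
      mul_left_cancel₀ hxne (by linear_combination h1 + A*a*hxx)
    have h3 : a * (|x| *C) = x*B*b := by
      rw [hkey]; linear_combination h2
    field_simp
    linear_combination h3
  have halg0 : ∀ a : ℝ, a = 1 + x^2 * chebR k (x^2) * a → a = chebR (k+1) (x^2) := by
    intro a h
    rw [hR k] at h
    rw [hR' k]
    set A := Uev ((k:ℤ)-1) with hA
    set B := Uev (k:ℤ) with hB
    set C := Uev ((k:ℤ)+1) with hC
    have hBpos : 0 < B := hUpos k (by omega)
    have hCpos : 0 < C := by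
      have h5 := hUpos (k+1) (by omega)
      rwa [show (((k+1:ℕ)):ℤ) = (k:ℤ)+1 by push_cast; ring] at h5
    have hkey : |x| * C = B - |x| * A := hUstep k
    have hxne : |x| ≠ 0 := ne_of_gt hx0
    have hBne : B ≠ 0 := ne_of_gt hBpos
    have hCne : C ≠ 0 := ne_of_gt hCpos
    have h1 : a * (|x| *B) = (|x| *B) + x^2*A*a := by
      conv_lhs => rw [h]
      field_simp
      try ring
    have h2 : a * B = B + |x| *A*a :=
      mul_left_cancel₀ hxne (by linear_combination h1 + A*a*hxx)
    have h3 : a * (|x| *C) = B := by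
      rw [hkey]; linear_combination h2
    field_simp
    linear_combination h3
  -- chebR 1 = 1
  have hcheb1 : chebR 1 (x^2) = 1 := by
    have h := hR' 0
    norm_num at h
    rw [h]
    have h0 : Uev 0 = 1 := by simp [hUdef, U_zero]
    have h1 : Uev 1 = 2*y := by simp [hUdef, U_one]
    rw [h0, h1, div_eq_one_iff_eq (ne_of_gt (mul_pos hx0 (by linarith))), hydef]
    field_simp
  have hclaim : ∀ d : ℕ, d + 1 ≤ k → F (k - d) = x * chebR (d + 1) (x^2) * F (k - d - 1) := by
    intro d
    induction d with
    | zero =>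
      intro h1k
      have h := hFrec k le_rfl
      rw [if_neg (by omega), if_pos (by omega), if_neg (by omega)] at h
      simpa [hcheb1] using h
    | succ d ih =>
      intro hd
      have h := hFrec (k - (d+1)) (by omega)
      rw [if_neg (by omega), if_pos (by omega), if_pos (by omega)] at h
      have ihh := ih (by omega)
      have e1 : k - d = k - (d+1) + 1 := by omega
      have e2 : k - d - 1 = k - (d+1) := by omega
      rw [e2, e1] at ihh
      rw [ihh] at h
      exact halg (d+1) (by omega) _ _ (by linear_combination h)
  have hstep' : ∀ i', 1 ≤ i' → i' ≤ k → F i' = x * chebR (k+1-i') (x^2) * F (i'-1) := by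
    intro i' h1 h2
    have h := hclaim (k - i') (by omega)
    rw [show k - (k-i') - 1 = i'-1 by omega, show k - (k-i') = i' by omega,
      show k - i' + 1 = k+1-i' by omega] at h
    exact h
  have hF0 : F 0 = chebR (k+1) (x^2) := by
    have h := hFrec 0 (by omega)
    rw [if_pos rfl, if_neg (by omega), if_pos (by omega)] at h
    have h1 := hstep' 1 le_rfl hk1
    rw [show k+1-1 = k by omega, show (1:ℕ)-1 = 0 from rfl] at h1
    rw [h1] at h
    exact halg0 _ (by linear_combination h)
  have hmain : ∀ i', i' ≤ k →
      F i' = chebR (k+1) (x^2) * ∏ r ∈ Finset.Icc 1 i', (x * chebR (k+1-r) (x^2)) := by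
    intro i'
    induction i' with
    | zero => intro _; simpa using hF0
    | succ n ih =>
      intro hn
      rw [Finset.prod_Icc_succ_top (by omega), hstep' (n+1) (by omega) hn,
        show n+1-1 = n by omega, ih (by omega)]
      ring
  exact ⟨hsum_abs i hik, hmain i hik⟩
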